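/- Let y_1, …, y_n be nonzero vectors in ℝ^q, let c′ > 0, and let μ > 1 + c′·n. Then the map G has a fixed point in D = {S symmetric : I ⪯ S ⪯ μI}, i.e., there exists a symmetric matrix S* with I ⪯ S* ⪯ μI and G(S*) = S*. -/

import Mathlib

open Matrix Classical

/-- Principal (symmetric positive semidefinite) square root of a matrix;
junk value `0` if the matrix is not positive semidefinite. -/
noncomputable def matSqrt {q : ℕ} (A : Matrix (Fin q) (Fin q) ℝ) : Matrix (Fin q) (Fin q) ℝ :=
  if h : A.PosSemidef then
    (h.1.eigenvectorUnitary : Matrix (Fin q) (Fin q) ℝ) *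
      diagonal ((↑) ∘ (fun x : ℝ => √x) ∘ h.1.eigenvalues) *
      (star h.1.eigenvectorUnitary : Matrix (Fin q) (Fin q) ℝ)
  else 0

/-- Loewner order: `loewnerLE A B` iff `B - A` is positive semidefinite. -/
def loewnerLE {q : ℕ} (A B : Matrix (Fin q) (Fin q) ℝ) : Prop := (B - A).PosSemidef

/-- Largest eigenvalue of a (Hermitian) matrix; junk value `0` otherwise. -/
noncomputable def maxEig {q : ℕ} (A : Matrix (Fin q) (Fin q) ℝ) : ℝ :=
  if h : A.IsHermitian then ⨆ i, h.eigenvalues i else 0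

/-- Smallest eigenvalue of a (Hermitian) matrix; junk value `0` otherwise. -/
noncomputable def minEig {q : ℕ} (A : Matrix (Fin q) (Fin q) ℝ) : ℝ :=
  if h : A.IsHermitian then ⨅ i, h.eigenvalues i else 0

/-- The matrix `Y` whose columns are the `y i`. -/
def Ymat {q n : ℕ} (y : Fin n → (Fin q → ℝ)) : Matrix (Fin q) (Fin n) ℝ :=
  Matrix.of fun i j => y j i

/-- The map `G(S) = I + c' · S^(1/2) Y D_S Yᵀ S^(1/2)`, where `D_S` is diagonal
with entries `1 / (yᵢᵀ S yᵢ)`. -/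
noncomputable def Gmap {q n : ℕ} (y : Fin n → (Fin q → ℝ)) (c' : ℝ)
    (S : Matrix (Fin q) (Fin q) ℝ) : Matrix (Fin q) (Fin q) ℝ :=
  1 + c' • (matSqrt S * Ymat y * Matrix.diagonal (fun i => (y i ⬝ᵥ S *ᵥ y i)⁻¹)
      * (Ymat y)ᵀ * matSqrt S)

section Aux

variable {q n : ℕ}

noncomputable def Matrix.PosSemidef.sqrt {A : Matrix (Fin q) (Fin q) ℝ} (h : A.PosSemidef) :
    Matrix (Fin q) (Fin q) ℝ :=
  (h.1.eigenvectorUnitary : Matrix (Fin q) (Fin q) ℝ) *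
    diagonal ((↑) ∘ (fun x : ℝ => √x) ∘ h.1.eigenvalues) *
    (star h.1.eigenvectorUnitary : Matrix (Fin q) (Fin q) ℝ)

lemma Matrix.PosSemidef.sqrt_mul_self {A : Matrix (Fin q) (Fin q) ℝ} (h : A.PosSemidef) :
    h.sqrt * h.sqrt = A := by
  have hU := Unitary.coe_star_mul_self h.1.eigenvectorUnitary
  unfold Matrix.PosSemidef.sqrt
  conv_rhs => rw [h.1.spectral_theorem, Unitary.conjStarAlgAut_apply]
  simp only [Matrix.mul_assoc]
  rw [← Matrix.mul_assoc (star _) _ (diagonal _ * _), hU, Matrix.one_mul,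
    ← Matrix.mul_assoc (diagonal _) (diagonal _), diagonal_mul_diagonal]
  congr 3
  ext i
  simp [Real.mul_self_sqrt (h.eigenvalues_nonneg i)]

lemma Matrix.PosSemidef.posSemidef_sqrt {A : Matrix (Fin q) (Fin q) ℝ} (h : A.PosSemidef) :
    h.sqrt.PosSemidef := by
  have hD : (diagonal ((↑) ∘ (fun x : ℝ => √x) ∘ h.1.eigenvalues) :
      Matrix (Fin q) (Fin q) ℝ).PosSemidef :=
    Matrix.PosSemidef.diagonal (fun i => by simp [Real.sqrt_nonneg])
  have := hD.mul_mul_conjTranspose_same (h.1.eigenvectorUnitary : Matrix (Fin q) (Fin q) ℝ)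
  rwa [← Matrix.star_eq_conjTranspose] at this

lemma psd_quad {A : Matrix (Fin q) (Fin q) ℝ} (hA : A.PosSemidef) (x : Fin q → ℝ) :
    0 ≤ x ⬝ᵥ A *ᵥ x := by simpa using hA.dotProduct_mulVec_nonneg x

lemma psd_of_quad {A : Matrix (Fin q) (Fin q) ℝ} (hA : A.IsHermitian)
    (h : ∀ x : Fin q → ℝ, 0 ≤ x ⬝ᵥ A *ᵥ x) : A.PosSemidef :=
  .of_dotProduct_mulVec_nonneg hA fun x => by simpa using h x

lemma herm_smul {A : Matrix (Fin q) (Fin q) ℝ} (hA : A.IsHermitian) (t : ℝ) :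
    (t • A).IsHermitian := by
  rw [Matrix.IsHermitian, conjTranspose_smul, hA.eq]
  simp

lemma herm_smul_one (c : ℝ) : ((c • 1 : Matrix (Fin q) (Fin q) ℝ)).IsHermitian := by
  simp [Matrix.IsHermitian, conjTranspose_smul, conjTranspose_one]

lemma quad_sub_smul_one (S : Matrix (Fin q) (Fin q) ℝ) (c : ℝ) (x : Fin q → ℝ) :
    x ⬝ᵥ (S - c • 1) *ᵥ x = x ⬝ᵥ S *ᵥ x - c * (x ⬝ᵥ x) := by
  simp [sub_mulVec, smul_mulVec, dotProduct_sub, dotProduct_smul, smul_eq_mul]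

lemma quad_smul_one_sub (S : Matrix (Fin q) (Fin q) ℝ) (c : ℝ) (x : Fin q → ℝ) :
    x ⬝ᵥ (c • 1 - S) *ᵥ x = c * (x ⬝ᵥ x) - x ⬝ᵥ S *ᵥ x := by
  simp [sub_mulVec, smul_mulVec, dotProduct_sub, dotProduct_smul, smul_eq_mul]

lemma dotProduct_self_pos' {x : Fin q → ℝ} (hx : x ≠ 0) : 0 < x ⬝ᵥ x := by
  rcases Function.ne_iff.mp hx with ⟨k, hk⟩
  exact Finset.sum_pos' (fun i _ => mul_self_nonneg _)
    ⟨k, Finset.mem_univ k, mul_self_pos.mpr hk⟩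

lemma dotProduct_self_nonneg' (x : Fin q → ℝ) : 0 ≤ x ⬝ᵥ x :=
  Finset.sum_nonneg fun k _ => mul_self_nonneg _

lemma spectral_package (S : Matrix (Fin q) (Fin q) ℝ) (hS : S.IsHermitian) :
    ∃ lam : Fin q → ℝ,
      S.det = ∏ j, lam j ∧
      S.trace = ∑ j, lam j ∧
      (∀ j, ∃ x : Fin q → ℝ, x ⬝ᵥ S *ᵥ x = lam j ∧ x ⬝ᵥ x = 1) ∧
      (∀ x : Fin q → ℝ, ∃ z : Fin q → ℝ,
        x ⬝ᵥ S *ᵥ x = ∑ j, lam j * z j ^ 2 ∧ x ⬝ᵥ x = ∑ j, z j ^ 2) := by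
  set U : Matrix (Fin q) (Fin q) ℝ := (hS.eigenvectorUnitary : Matrix (Fin q) (Fin q) ℝ) with hU
  have hstar : star U = Uᵀ := by
    ext i j; simp [Matrix.star_apply]
  have hU1 : U * Uᵀ = 1 := by
    rw [← hstar]; exact (Matrix.mem_unitaryGroup_iff).mp (hS.eigenvectorUnitary).2
  have hU2 : Uᵀ * U = 1 := by
    rw [← hstar]; exact (Matrix.mem_unitaryGroup_iff').mp (hS.eigenvectorUnitary).2
  set D : Matrix (Fin q) (Fin q) ℝ := diagonal hS.eigenvalues with hD
  have hspec : S = U * D * Uᵀ := by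
    have := hS.spectral_theorem
    simp only [Unitary.conjStarAlgAut_apply, Unitary.coe_star] at this
    rw [← hU, hstar] at this
    simpa [hD, hU, Function.comp] using this
  refine ⟨hS.eigenvalues, ?_, ?_, ?_, ?_⟩
  · simpa using hS.det_eq_prod_eigenvalues
  · conv_lhs => rw [hspec]
    rw [Matrix.trace_mul_cycle, hU2, Matrix.one_mul, trace_diagonal]
  · intro j
    refine ⟨U *ᵥ Pi.single j 1, ?_, ?_⟩
    · have h1 : S *ᵥ (U *ᵥ Pi.single j 1) = hS.eigenvalues j • (U *ᵥ Pi.single j 1) := by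
        conv_lhs => rw [hspec]
        rw [← mulVec_mulVec, ← mulVec_mulVec, mulVec_mulVec (Pi.single j 1) Uᵀ U, hU2, one_mulVec,
          hD, diagonal_mulVec_single]
        ext i
        simp [mulVec_single, Pi.smul_apply, smul_eq_mul]
        ring
      rw [h1, dotProduct_smul, smul_eq_mul]
      have h2 : (U *ᵥ Pi.single j 1) ⬝ᵥ (U *ᵥ Pi.single j 1) = 1 := by
        rw [dotProduct_mulVec, ← mulVec_transpose, mulVec_mulVec, hU2, one_mulVec]
        simp [Pi.single_apply]
      rw [h2, mul_one]
    · rw [dotProduct_mulVec, ← mulVec_transpose, mulVec_mulVec, hU2, one_mulVec]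
      simp [Pi.single_apply]
  · intro x
    refine ⟨Uᵀ *ᵥ x, ?_, ?_⟩
    · conv_lhs => rw [hspec]
      rw [← mulVec_mulVec, ← mulVec_mulVec, dotProduct_mulVec x U, ← mulVec_transpose]
      simp [mulVec_diagonal, dotProduct, hD]
      exact Finset.sum_congr rfl fun j _ => by ring
    · conv_lhs => rw [show x ⬝ᵥ x = x ⬝ᵥ (1 *ᵥ x) by rw [one_mulVec], ← hU1, ← mulVec_mulVec,
        dotProduct_mulVec x U, ← mulVec_transpose]
      simp [dotProduct]
      exact Finset.sum_congr rfl fun j _ => by ring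

/-- The constraint set. -/
def Kset (q : ℕ) (δ R : ℝ) : Set (Matrix (Fin q) (Fin q) ℝ) :=
  {S | S.IsHermitian ∧ (S - δ • 1).PosSemidef ∧ (R • (1 : Matrix (Fin q) (Fin q) ℝ) - S).PosSemidef}

lemma mem_Kset_iff {δ R : ℝ} {S : Matrix (Fin q) (Fin q) ℝ} :
    S ∈ Kset q δ R ↔ S.IsHermitian ∧ (∀ x : Fin q → ℝ, δ * (x ⬝ᵥ x) ≤ x ⬝ᵥ S *ᵥ x) ∧
      (∀ x : Fin q → ℝ, x ⬝ᵥ S *ᵥ x ≤ R * (x ⬝ᵥ x)) := by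
  constructor
  · rintro ⟨hH, h1, h2⟩
    refine ⟨hH, fun x => ?_, fun x => ?_⟩
    · have := psd_quad h1 x; rw [quad_sub_smul_one] at this; linarith
    · have := psd_quad h2 x; rw [quad_smul_one_sub] at this; linarith
  · rintro ⟨hH, h1, h2⟩
    refine ⟨hH, psd_of_quad (hH.sub (herm_smul_one δ)) fun x => ?_,
      psd_of_quad ((herm_smul_one R).sub hH) fun x => ?_⟩
    · rw [quad_sub_smul_one]; linarith [h1 x]
    · rw [quad_smul_one_sub]; linarith [h2 x]

lemma quad_single (S : Matrix (Fin q) (Fin q) ℝ) (i : Fin q) :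
    (Pi.single i 1 : Fin q → ℝ) ⬝ᵥ S *ᵥ (Pi.single i 1 : Fin q → ℝ) = S i i := by
  rw [mulVec_single_one, single_one_dotProduct]; simp

lemma isCompact_Kset {δ R : ℝ} (hδ : 0 ≤ δ) (hR : 0 ≤ R) : IsCompact (Kset q δ R) := by
  have hsub : Kset q δ R ⊆ {S : Matrix (Fin q) (Fin q) ℝ | ∀ i j, S i j ∈ Set.Icc (-R) R} := by
    intro S hS
    obtain ⟨hH, hlow, hup⟩ := mem_Kset_iff.mp hS
    have hquad : ∀ x : Fin q → ℝ, 0 ≤ x ⬝ᵥ S *ᵥ x ∧ x ⬝ᵥ S *ᵥ x ≤ R * (x ⬝ᵥ x) := by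
      intro x
      refine ⟨le_trans ?_ (hlow x), hup x⟩
      have := dotProduct_self_nonneg' x
      positivity
    intro i j
    have hdiag : ∀ k, 0 ≤ S k k ∧ S k k ≤ R := by
      intro k
      have h := hquad (Pi.single k 1)
      rw [quad_single] at h
      have h2' : (Pi.single k 1 : Fin q → ℝ) ⬝ᵥ (Pi.single k 1 : Fin q → ℝ) = 1 := by
        simp [dotProduct, Pi.single_apply]
      rw [h2'] at h
      exact ⟨h.1, by linarith [h.2]⟩
    by_cases hij : i = j
    · subst hij; exact ⟨by linarith [(hdiag i).1, hR], (hdiag i).2⟩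
    · have hsym : S j i = S i j := by
        have := congrFun (congrFun hH i) j
        simpa using this
      have key : ∀ (s : ℝ), 0 ≤ S i i + s * s * S j j + 2 * s * S i j ∧
          S i i + s * s * S j j + 2 * s * S i j ≤ R * (1 + s * s) := by
        intro s
        set x : Fin q → ℝ := Pi.single i 1 + Pi.single j s with hx
        have hq := hquad x
        have hxx : x ⬝ᵥ x = 1 + s * s := by
          rw [hx, dotProduct_add, add_dotProduct, add_dotProduct]
          have e1 : (Pi.single i 1 : Fin q → ℝ) ⬝ᵥ (Pi.single i 1 : Fin q → ℝ) = 1 := by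
            simp [dotProduct, Pi.single_apply]
          have e2 : (Pi.single j s : Fin q → ℝ) ⬝ᵥ (Pi.single j s : Fin q → ℝ) = s * s := by
            simp [dotProduct, Pi.single_apply]
          have e3 : (Pi.single i 1 : Fin q → ℝ) ⬝ᵥ (Pi.single j s : Fin q → ℝ) = 0 := by
            simp [dotProduct, Pi.single_apply, hij]
            exact fun h => absurd h.symm hij
          have e4 : (Pi.single j s : Fin q → ℝ) ⬝ᵥ (Pi.single i 1 : Fin q → ℝ) = 0 := by
            simp [dotProduct, Pi.single_apply]
            exact fun h => absurd h hij
          rw [e1, e2, e3, e4]; ring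
        have hXSX : x ⬝ᵥ S *ᵥ x = S i i + s * s * S j j + 2 * s * S i j := by
          rw [hx, mulVec_add, dotProduct_add, add_dotProduct, add_dotProduct]
          rw [show S *ᵥ Pi.single i 1 = fun k => S k i * 1 by ext k; simp [mulVec, dotProduct, Pi.single_apply],
            show S *ᵥ Pi.single j s = fun k => S k j * s by ext k; simp [mulVec, dotProduct, Pi.single_apply]]
          have e1 : (Pi.single i 1 : Fin q → ℝ) ⬝ᵥ (fun k => S k i * 1) = S i i := by
            simp [single_one_dotProduct]
          have e2 : (Pi.single i 1 : Fin q → ℝ) ⬝ᵥ (fun k => S k j * s) = S i j * s := by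
            simp [single_one_dotProduct]
          have e3 : (Pi.single j s : Fin q → ℝ) ⬝ᵥ (fun k => S k i * 1) = s * (S j i * 1) := by
            simp [dotProduct, Pi.single_apply]
          have e4 : (Pi.single j s : Fin q → ℝ) ⬝ᵥ (fun k => S k j * s) = s * (S j j * s) := by
            simp [dotProduct, Pi.single_apply]
          rw [e1, e2, e3, e4, hsym]; ring
        rw [hxx, hXSX] at hq
        exact hq
      have k1 := key 1
      have k2 := key (-1)
      constructor <;> nlinarith [k1.1, k1.2, k2.1, k2.2, (hdiag i).1, (hdiag i).2,
        (hdiag j).1, (hdiag j).2]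
  have hbox : IsCompact {S : Matrix (Fin q) (Fin q) ℝ | ∀ i j, S i j ∈ Set.Icc (-R) R} := by
    have heq : {S : Matrix (Fin q) (Fin q) ℝ | ∀ i j, S i j ∈ Set.Icc (-R) R} =
        Set.univ.pi (fun _ : Fin q => Set.univ.pi (fun _ : Fin q => Set.Icc (-R) R)) := by
      ext S
      constructor
      · exact fun h i _ j _ => h i j
      · exact fun h i j => h i (Set.mem_univ i) j (Set.mem_univ j)
    rw [heq]
    exact isCompact_univ_pi fun i => isCompact_univ_pi fun j => isCompact_Icc
  apply IsCompact.of_isClosed_subset hbox ?_ hsub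
  have c1 : IsClosed {S : Matrix (Fin q) (Fin q) ℝ | S.IsHermitian} := by
    have : {S : Matrix (Fin q) (Fin q) ℝ | S.IsHermitian} = {S | Sᴴ = S} := rfl
    rw [this]
    exact isClosed_eq (continuous_id.matrix_conjTranspose) continuous_id
  have c2 : ∀ c : ℝ, IsClosed {S : Matrix (Fin q) (Fin q) ℝ |
      ∀ x : Fin q → ℝ, c * (x ⬝ᵥ x) ≤ x ⬝ᵥ S *ᵥ x} := by
    intro c
    have : {S : Matrix (Fin q) (Fin q) ℝ | ∀ x : Fin q → ℝ, c * (x ⬝ᵥ x) ≤ x ⬝ᵥ S *ᵥ x} =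
        ⋂ x : Fin q → ℝ, {S | c * (x ⬝ᵥ x) ≤ x ⬝ᵥ S *ᵥ x} := by ext; simp
    rw [this]
    refine isClosed_iInter fun x => isClosed_le continuous_const ?_
    exact (continuous_const.dotProduct (continuous_id.matrix_mulVec continuous_const))
  have c3 : ∀ c : ℝ, IsClosed {S : Matrix (Fin q) (Fin q) ℝ |
      ∀ x : Fin q → ℝ, x ⬝ᵥ S *ᵥ x ≤ c * (x ⬝ᵥ x)} := by
    intro c
    have : {S : Matrix (Fin q) (Fin q) ℝ | ∀ x : Fin q → ℝ, x ⬝ᵥ S *ᵥ x ≤ c * (x ⬝ᵥ x)} =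
        ⋂ x : Fin q → ℝ, {S | x ⬝ᵥ S *ᵥ x ≤ c * (x ⬝ᵥ x)} := by ext; simp
    rw [this]
    refine isClosed_iInter fun x => isClosed_le ?_ continuous_const
    exact (continuous_const.dotProduct (continuous_id.matrix_mulVec continuous_const))
  have hKeq : Kset q δ R = {S : Matrix (Fin q) (Fin q) ℝ | S.IsHermitian} ∩
      ({S | ∀ x : Fin q → ℝ, δ * (x ⬝ᵥ x) ≤ x ⬝ᵥ S *ᵥ x} ∩
       {S | ∀ x : Fin q → ℝ, x ⬝ᵥ S *ᵥ x ≤ R * (x ⬝ᵥ x)}) := by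
    ext S
    rw [Set.mem_inter_iff, Set.mem_inter_iff]
    exact mem_Kset_iff.trans (by tauto)
  rw [hKeq]
  exact c1.inter ((c2 δ).inter (c3 R))

/-- The objective function. -/
noncomputable def gfun (y : Fin n → Fin q → ℝ) (c' : ℝ) (S : Matrix (Fin q) (Fin q) ℝ) : ℝ :=
  Real.log S.det - S.trace + c' * ∑ i, Real.log (y i ⬝ᵥ S *ᵥ y i)

lemma posDef_of_low {S : Matrix (Fin q) (Fin q) ℝ} (hH : S.IsHermitian) {δ : ℝ} (hδ : 0 < δ)
    (hlow : ∀ x : Fin q → ℝ, δ * (x ⬝ᵥ x) ≤ x ⬝ᵥ S *ᵥ x) : S.PosDef := by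
  refine .of_dotProduct_mulVec_pos hH fun x hx => ?_
  have h1 := hlow x
  have h2 := dotProduct_self_pos' hx
  simp only [star_trivial]
  nlinarith

lemma continuousOn_gfun (y : Fin n → Fin q → ℝ) (c' : ℝ) {K : Set (Matrix (Fin q) (Fin q) ℝ)}
    (hdet : ∀ S ∈ K, S.det ≠ 0) (hP : ∀ S ∈ K, ∀ i, y i ⬝ᵥ S *ᵥ y i ≠ 0) :
    ContinuousOn (gfun y c') K := by
  intro S hS
  have hquadcont : ∀ v : Fin q → ℝ, Continuous fun T : Matrix (Fin q) (Fin q) ℝ => v ⬝ᵥ T *ᵥ v :=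
    fun v => continuous_const.dotProduct (continuous_id.matrix_mulVec continuous_const)
  have c1 : ContinuousAt (fun T : Matrix (Fin q) (Fin q) ℝ => Real.log T.det) S :=
    (Real.continuousAt_log (hdet S hS)).comp (continuous_id.matrix_det).continuousAt
  have c2 : ContinuousAt (fun T : Matrix (Fin q) (Fin q) ℝ => T.trace) S :=
    (continuous_id.matrix_trace).continuousAt
  have c3 : ∀ i : Fin n, ContinuousAt (fun T : Matrix (Fin q) (Fin q) ℝ =>
      Real.log (y i ⬝ᵥ T *ᵥ y i)) S := fun i =>
    ContinuousAt.comp (g := Real.log) (Real.continuousAt_log (hP S hS i))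
      (hquadcont (y i)).continuousAt
  have c4 : ContinuousAt (fun T : Matrix (Fin q) (Fin q) ℝ =>
      ∑ i, Real.log (y i ⬝ᵥ T *ᵥ y i)) S := by
    exact tendsto_finset_sum _ (fun i _ => c3 i)
  exact ((c1.sub c2).add (continuousAt_const.mul c4)).continuousWithinAt

lemma exists_R (a b c : ℝ) : ∃ R : ℝ, 4 ≤ R ∧ a * Real.log R - R / 2 + b < c := by
  have hpos : (0:ℝ) < 1 / (4 * (|a| + 1)) := by positivity
  have h1 := Real.isLittleO_log_id_atTop.bound hpos
  have h2 : ∀ᶠ R : ℝ in Filter.atTop, 4 ≤ R := Filter.eventually_ge_atTop 4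
  have h3 : ∀ᶠ R : ℝ in Filter.atTop, 4 * (b - c) + 4 ≤ R := Filter.eventually_ge_atTop _
  obtain ⟨R, hR1, hR2, hR3⟩ := (h1.and (h2.and h3)).exists
  refine ⟨R, hR2, ?_⟩
  simp only [Real.norm_eq_abs, id] at hR1
  have hRpos : (0:ℝ) < R := by linarith
  have habs : |R| = R := abs_of_pos hRpos
  rw [habs] at hR1
  have key : a * Real.log R ≤ R / 4 := by
    have t1 : a * Real.log R ≤ |a| * |Real.log R| := by
      calc a * Real.log R ≤ |a * Real.log R| := le_abs_self _
      _ = |a| * |Real.log R| := abs_mul _ _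
    have t2 : |a| * |Real.log R| ≤ |a| * (1 / (4 * (|a| + 1)) * R) :=
      mul_le_mul_of_nonneg_left hR1 (abs_nonneg a)
    have t3 : |a| * (1 / (4 * (|a| + 1)) * R) ≤ R / 4 := by
      set u : ℝ := 1 / (4 * (|a| + 1)) with hud
      have hu : u * (4 * (|a| + 1)) = 1 := by
        rw [hud]; field_simp
      have hu4 : |a| * u ≤ 1 / 4 := by nlinarith [hu, hpos]
      calc |a| * (u * R) = (|a| * u) * R := by ring
        _ ≤ (1/4) * R := mul_le_mul_of_nonneg_right hu4 hRpos.le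
        _ = R / 4 := by ring
    linarith
  linarith

open Polynomial in
lemma det_factor {S H : Matrix (Fin q) (Fin q) ℝ} (hdet : IsUnit S.det) (t : ℝ) :
    (S + t • H).det = S.det * (1 + (S⁻¹ * H).trace * t +
      (1 + (Polynomial.X : ℝ[X]) • (S⁻¹ * H).map Polynomial.C).det.divX.divX.eval t * t ^ 2) := by
  have hfac : S + t • H = S * (1 + t • (S⁻¹ * H)) := by
    rw [Matrix.mul_add, Matrix.mul_one, Matrix.mul_smul, ← Matrix.mul_assoc,
      Matrix.mul_nonsing_inv _ hdet, Matrix.one_mul]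
  rw [hfac, det_mul, Matrix.det_one_add_smul]

open Polynomial in
lemma hasDerivAt_logdet {S H : Matrix (Fin q) (Fin q) ℝ} (hdet : S.det ≠ 0) :
    HasDerivAt (fun t : ℝ => Real.log ((S + t • H).det)) ((S⁻¹ * H).trace) 0 := by
  have hu : IsUnit S.det := isUnit_iff_ne_zero.mpr hdet
  set c : ℝ := (S⁻¹ * H).trace with hc
  set e : ℝ[X] := (1 + (Polynomial.X : ℝ[X]) • (S⁻¹ * H).map Polynomial.C).det.divX.divX with he
  have hfun : (fun t : ℝ => Real.log ((S + t • H).det)) =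
      fun t : ℝ => Real.log (S.det * (1 + c * t + e.eval t * t ^ 2)) := by
    funext t
    rw [det_factor hu]
  rw [hfun]
  have hp : HasDerivAt (fun t : ℝ => 1 + c * t + e.eval t * t ^ 2) c 0 := by
    have h1 : HasDerivAt (fun t : ℝ => c * t) c 0 := by
      simpa using (hasDerivAt_id (0:ℝ)).const_mul c
    have h2 : HasDerivAt (fun t : ℝ => e.eval t * t ^ 2) 0 0 := by
      have := (e.hasDerivAt (0:ℝ)).fun_mul (hasDerivAt_pow 2 (0:ℝ))
      simpa using this
    simpa using ((hasDerivAt_const (0:ℝ) (1:ℝ)).fun_add h1).fun_add h2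
  have hmul : HasDerivAt (fun t : ℝ => S.det * (1 + c * t + e.eval t * t ^ 2)) (S.det * c) 0 :=
    hp.const_mul S.det
  have hne : S.det * (1 + c * 0 + e.eval 0 * 0 ^ 2) ≠ 0 := by
    simpa using hdet
  have := hmul.log hne
  convert this using 1
  field_simp
  simp

lemma hasDerivAt_quadlog {S H : Matrix (Fin q) (Fin q) ℝ} (v : Fin q → ℝ)
    (hP : v ⬝ᵥ S *ᵥ v ≠ 0) :
    HasDerivAt (fun t : ℝ => Real.log (v ⬝ᵥ (S + t • H) *ᵥ v))
      ((v ⬝ᵥ H *ᵥ v) / (v ⬝ᵥ S *ᵥ v)) 0 := by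
  have hfun : (fun t : ℝ => Real.log (v ⬝ᵥ (S + t • H) *ᵥ v)) =
      fun t : ℝ => Real.log (v ⬝ᵥ S *ᵥ v + t * (v ⬝ᵥ H *ᵥ v)) := by
    funext t
    congr 1
    simp [add_mulVec, smul_mulVec, dotProduct_add, dotProduct_smul, smul_eq_mul]
  rw [hfun]
  have hlin : HasDerivAt (fun t : ℝ => v ⬝ᵥ S *ᵥ v + t * (v ⬝ᵥ H *ᵥ v)) (v ⬝ᵥ H *ᵥ v) 0 := by
    simpa using (hasDerivAt_const (0:ℝ) (v ⬝ᵥ S *ᵥ v)).fun_add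
      ((hasDerivAt_id (0:ℝ)).mul_const (v ⬝ᵥ H *ᵥ v))
  have hne : v ⬝ᵥ S *ᵥ v + 0 * (v ⬝ᵥ H *ᵥ v) ≠ 0 := by simpa using hP
  have := hlin.log hne
  convert this using 1
  simp

lemma hasDerivAt_gfun (y : Fin n → Fin q → ℝ) (c' : ℝ) {S : Matrix (Fin q) (Fin q) ℝ}
    (H : Matrix (Fin q) (Fin q) ℝ) (hdet : S.det ≠ 0)
    (hP : ∀ i, y i ⬝ᵥ S *ᵥ y i ≠ 0) :
    HasDerivAt (fun t : ℝ => gfun y c' (S + t • H))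
      ((S⁻¹ * H).trace - H.trace + c' * ∑ i, (y i ⬝ᵥ H *ᵥ y i) / (y i ⬝ᵥ S *ᵥ y i)) 0 := by
  have htr : HasDerivAt (fun t : ℝ => (S + t • H).trace) H.trace 0 := by
    have hfun : (fun t : ℝ => (S + t • H).trace) = fun t : ℝ => S.trace + t * H.trace := by
      funext t
      rw [trace_add, trace_smul]
      simp
    rw [hfun]
    simpa using (hasDerivAt_const (0:ℝ) S.trace).fun_add
      ((hasDerivAt_id (0:ℝ)).mul_const H.trace)
  have hsum : HasDerivAt (fun t : ℝ => ∑ i, Real.log (y i ⬝ᵥ (S + t • H) *ᵥ y i))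
      (∑ i, (y i ⬝ᵥ H *ᵥ y i) / (y i ⬝ᵥ S *ᵥ y i)) 0 :=
    HasDerivAt.fun_sum fun i _ => hasDerivAt_quadlog (y i) (hP i)
  exact ((hasDerivAt_logdet hdet).sub htr).add (hsum.const_mul c')

lemma trace_mul_diag (A : Matrix (Fin n) (Fin n) ℝ) (d : Fin n → ℝ) :
    (A * diagonal d).trace = ∑ i, A i i * d i := by
  simp [Matrix.trace, Matrix.diag, Matrix.mul_apply, Matrix.diagonal_apply,
    Finset.sum_ite_eq, mul_comm]

lemma YtHY_diag (y : Fin n → Fin q → ℝ) (H : Matrix (Fin q) (Fin q) ℝ) (i : Fin n) :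
    ((Ymat y)ᵀ * H * Ymat y) i i = y i ⬝ᵥ H *ᵥ y i := by
  simp only [Matrix.mul_apply, Matrix.transpose_apply, Ymat, Matrix.of_apply,
    dotProduct, mulVec, Finset.sum_mul, Finset.mul_sum]
  rw [Finset.sum_comm]
  exact Finset.sum_congr rfl fun a _ => Finset.sum_congr rfl fun b _ => by ring

lemma trace_YDYt_mul (y : Fin n → Fin q → ℝ) (d : Fin n → ℝ) (H : Matrix (Fin q) (Fin q) ℝ) :
    (Ymat y * diagonal d * (Ymat y)ᵀ * H).trace = ∑ i, d i * (y i ⬝ᵥ H *ᵥ y i) := by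
  have h1 : Ymat y * diagonal d * (Ymat y)ᵀ * H = (Ymat y * diagonal d) * ((Ymat y)ᵀ * H) := by
    rw [Matrix.mul_assoc]
  rw [h1, Matrix.trace_mul_comm, ← Matrix.mul_assoc, Matrix.mul_assoc ((Ymat y)ᵀ) H (Ymat y),
    trace_mul_diag]
  exact Finset.sum_congr rfl fun i _ => by
    rw [← Matrix.mul_assoc, YtHY_diag, mul_comm]

lemma trace_sq_eq_sum_sq {A : Matrix (Fin q) (Fin q) ℝ} (hA : Aᵀ = A) :
    (A * A).trace = ∑ i, ∑ j, (A i j) ^ 2 := by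
  simp only [Matrix.trace, Matrix.diag, Matrix.mul_apply]
  refine Finset.sum_congr rfl fun i _ => Finset.sum_congr rfl fun j _ => ?_
  have h : A j i = A i j := by
    conv_lhs => rw [← hA]
    rfl
  rw [h]; ring

lemma Gmap_grouped (y : Fin n → Fin q → ℝ) (c' : ℝ) (S : Matrix (Fin q) (Fin q) ℝ)
    (hpsd : S.PosSemidef) :
    Gmap y c' S = 1 + hpsd.sqrt *
      (c' • (Ymat y * diagonal (fun i => (y i ⬝ᵥ S *ᵥ y i)⁻¹) * (Ymat y)ᵀ)) * hpsd.sqrt := by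
  have hQ : matSqrt S = hpsd.sqrt := dif_pos hpsd
  rw [Gmap, hQ]
  congr 1
  rw [Matrix.mul_smul, Matrix.smul_mul]
  congr 1
  rw [Matrix.mul_assoc hpsd.sqrt, Matrix.mul_assoc hpsd.sqrt]

lemma Gmap_eq_self (y : Fin n → Fin q → ℝ) (c' : ℝ) (S : Matrix (Fin q) (Fin q) ℝ)
    (hSpd : S.PosDef)
    (heq : c' • (Ymat y * diagonal (fun i => (y i ⬝ᵥ S *ᵥ y i)⁻¹) * (Ymat y)ᵀ) = 1 - S⁻¹) :
    Gmap y c' S = S := by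
  have hpsd : S.PosSemidef := hSpd.posSemidef
  set Q := hpsd.sqrt with hQdef
  have hQQ : Q * Q = S := hpsd.sqrt_mul_self
  have hdetS : S.det ≠ 0 := hSpd.det_pos.ne'
  have hdetQ : Q.det ≠ 0 := by
    intro h
    apply hdetS
    rw [← hQQ, det_mul, h, mul_zero]
  have hQu : IsUnit Q.det := isUnit_iff_ne_zero.mpr hdetQ
  have hQinv : Q * S⁻¹ * Q = 1 := by
    rw [← hQQ, Matrix.mul_inv_rev, ← Matrix.mul_assoc,
      Matrix.mul_nonsing_inv _ hQu, Matrix.one_mul, Matrix.nonsing_inv_mul _ hQu]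
  rw [Gmap_grouped y c' S hpsd, heq, Matrix.mul_sub, Matrix.mul_one, Matrix.sub_mul, hQQ, hQinv]
  abel

lemma trace_eq_of_fixed (y : Fin n → Fin q → ℝ) (c' : ℝ) (S : Matrix (Fin q) (Fin q) ℝ)
    (hpsd : S.PosSemidef)
    (hP : ∀ i, y i ⬝ᵥ S *ᵥ y i ≠ 0)
    (hS : S = 1 + hpsd.sqrt * (c' • (Ymat y * diagonal (fun i => (y i ⬝ᵥ S *ᵥ y i)⁻¹)
      * (Ymat y)ᵀ)) * hpsd.sqrt) :
    S.trace = q + c' * n := by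
  set Q := hpsd.sqrt with hQdef
  have hQQ : Q * Q = S := hpsd.sqrt_mul_self
  have htr : (Q * (c' • (Ymat y * diagonal (fun i => (y i ⬝ᵥ S *ᵥ y i)⁻¹) * (Ymat y)ᵀ)) * Q).trace
      = c' * n := by
    rw [Matrix.trace_mul_cycle, hQQ, Matrix.mul_smul, Matrix.trace_smul, Matrix.trace_mul_comm]
    have h2 : (Ymat y * diagonal (fun i => (y i ⬝ᵥ S *ᵥ y i)⁻¹) * (Ymat y)ᵀ * S).trace
        = ∑ i : Fin n, (y i ⬝ᵥ S *ᵥ y i)⁻¹ * (y i ⬝ᵥ S *ᵥ y i) := trace_YDYt_mul y _ S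
    rw [h2]
    have h3 : ∀ i : Fin n, (y i ⬝ᵥ S *ᵥ y i)⁻¹ * (y i ⬝ᵥ S *ᵥ y i) = 1 := fun i =>
      inv_mul_cancel₀ (hP i)
    rw [Finset.sum_congr rfl fun i _ => h3 i]
    simp
  conv_lhs => rw [hS]
  rw [Matrix.trace_add, htr, Matrix.trace_one]
  simp

lemma quad_abs_le (H : Matrix (Fin q) (Fin q) ℝ) (x : Fin q → ℝ) :
    |x ⬝ᵥ H *ᵥ x| ≤ (∑ a, ∑ b, |H a b|) * (x ⬝ᵥ x) := by
  have hsq : ∀ a : Fin q, x a * x a ≤ x ⬝ᵥ x := by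
    intro a
    have : ∀ k, 0 ≤ x k * x k := fun k => mul_self_nonneg _
    exact Finset.single_le_sum (fun k _ => this k) (Finset.mem_univ a)
  have habs : ∀ a b : Fin q, |x a| * |x b| ≤ x ⬝ᵥ x := by
    intro a b
    have h1 := hsq a
    have h2 := hsq b
    have h3 : |x a| * |x a| = x a * x a := abs_mul_abs_self _
    have h4 : |x b| * |x b| = x b * x b := abs_mul_abs_self _
    nlinarith [abs_nonneg (x a), abs_nonneg (x b)]
  have hexp : x ⬝ᵥ H *ᵥ x = ∑ a, ∑ b, x a * (H a b * x b) := by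
    simp [dotProduct, mulVec, Finset.mul_sum]
  rw [hexp]
  calc |∑ a, ∑ b, x a * (H a b * x b)| ≤ ∑ a, |∑ b, x a * (H a b * x b)| :=
        Finset.abs_sum_le_sum_abs _ _
    _ ≤ ∑ a, ∑ b, |x a * (H a b * x b)| :=
        Finset.sum_le_sum fun a _ => Finset.abs_sum_le_sum_abs _ _
    _ ≤ ∑ a, ∑ b, |H a b| * (x ⬝ᵥ x) := by
        refine Finset.sum_le_sum fun a _ => Finset.sum_le_sum fun b _ => ?_
        rw [abs_mul, abs_mul]
        calc |x a| * (|H a b| * |x b|) = |H a b| * (|x a| * |x b|) := by ring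
          _ ≤ |H a b| * (x ⬝ᵥ x) := mul_le_mul_of_nonneg_left (habs a b) (abs_nonneg _)
    _ = (∑ a, ∑ b, |H a b|) * (x ⬝ᵥ x) := by
        rw [Finset.sum_mul]
        exact Finset.sum_congr rfl fun a _ => by rw [Finset.sum_mul]

lemma ct_eq_t {m k : ℕ} (A : Matrix (Fin m) (Fin k) ℝ) : Aᴴ = Aᵀ := by
  ext i j
  simp [conjTranspose_apply]

end Aux

set_option maxHeartbeats 1000000 in
/-- If the `yᵢ` are nonzero, `c' > 0`, and `μ > 1 + c'·n`, the map `G` has a fixed point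
in `D = {S symmetric : I ⪯ S ⪯ μI}`. -/
theorem Gmap_exists_fixedPoint {q n : ℕ}
    (y : Fin n → (Fin q → ℝ)) (hy : ∀ i, y i ≠ 0)
    {c' : ℝ} (hc' : 0 < c') {μ : ℝ} (hμ : 1 + c' * n < μ) :
    ∃ S : Matrix (Fin q) (Fin q) ℝ, S.IsHermitian ∧ loewnerLE 1 S ∧ loewnerLE S (μ • 1) ∧
      Gmap y c' S = S := by
  classical
  -- basic positivity of the data
  set N : Fin n → ℝ := fun i => y i ⬝ᵥ y i with hN
  have hNpos : ∀ i, 0 < N i := fun i => dotProduct_self_pos' (hy i)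
  -- value at the identity
  have hg1 : gfun y c' 1 = -(q : ℝ) + c' * ∑ i, Real.log (N i) := by
    rw [gfun]
    simp [Matrix.one_mulVec, hN]
  set g1 : ℝ := gfun y c' 1 with hg1def
  set CN : ℝ := c' * ∑ i, Real.log (N i) with hCN
  -- choose R
  obtain ⟨R, hR4, hRbig⟩ := exists_R ((q : ℝ) + c' * n) CN (g1 - 1)
  have hRpos : (0:ℝ) < R := by linarith
  have hlogR : (0:ℝ) ≤ Real.log R := Real.log_nonneg (by linarith)
  set C3 : ℝ := ((q : ℝ) + c' * n) * Real.log R + CN with hC3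
  have hRbig' : C3 - R / 2 < g1 - 1 := by rw [hC3]; linarith
  -- choose δ
  set δ : ℝ := min (1/2) (Real.exp (g1 - 2 - C3) / 2) with hδdef
  have hδpos : 0 < δ := lt_min (by norm_num) (by positivity)
  have hδhalf : δ ≤ 1/2 := min_le_left _ _
  have hlogδ : Real.log (2 * δ) ≤ g1 - 2 - C3 := by
    have h2δ : 2 * δ ≤ Real.exp (g1 - 2 - C3) := by
      have := min_le_right (1/2 : ℝ) (Real.exp (g1 - 2 - C3) / 2)
      rw [← hδdef] at this
      linarith
    calc Real.log (2 * δ) ≤ Real.log (Real.exp (g1 - 2 - C3)) :=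
          Real.log_le_log (by positivity) h2δ
      _ = g1 - 2 - C3 := Real.log_exp _
  -- the compact set
  set K : Set (Matrix (Fin q) (Fin q) ℝ) := Kset q δ R with hK
  have h1K : (1 : Matrix (Fin q) (Fin q) ℝ) ∈ K := by
    rw [hK, mem_Kset_iff]
    refine ⟨isHermitian_one, fun x => ?_, fun x => ?_⟩
    · rw [Matrix.one_mulVec]
      nlinarith [dotProduct_self_nonneg' x]
    · rw [Matrix.one_mulVec]
      nlinarith [dotProduct_self_nonneg' x]
  have hKpd : ∀ S ∈ K, S.PosDef := by
    intro S hS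
    obtain ⟨hH, hlow, _⟩ := mem_Kset_iff.mp hS
    exact posDef_of_low hH hδpos hlow
  have hKP : ∀ S ∈ K, ∀ i, 0 < y i ⬝ᵥ S *ᵥ y i := by
    intro S hS i
    obtain ⟨hH, hlow, _⟩ := mem_Kset_iff.mp hS
    have := hlow (y i)
    nlinarith [hNpos i]
  -- maximize
  obtain ⟨S, hSK, hmax⟩ := (isCompact_Kset hδpos.le hRpos.le).exists_isMaxOn ⟨1, h1K⟩
    (continuousOn_gfun y c' (fun S hS => (hKpd S hS).det_pos.ne')
      (fun S hS i => (hKP S hS i).ne'))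
  obtain ⟨hH, hlow, hup⟩ := mem_Kset_iff.mp hSK
  have hgS : g1 ≤ gfun y c' S := hmax h1K
  -- spectral data
  obtain ⟨lam, hldet, hltr, hper, hquad⟩ := spectral_package S hH
  have hlamlow : ∀ j, δ ≤ lam j := by
    intro j
    obtain ⟨x, hx1, hx2⟩ := hper j
    have := hlow x
    rw [hx1, hx2] at this
    linarith
  have hlamup : ∀ j, lam j ≤ R := by
    intro j
    obtain ⟨x, hx1, hx2⟩ := hper j
    have := hup x
    rw [hx1, hx2] at this
    linarith
  have hlampos : ∀ j, 0 < lam j := fun j => lt_of_lt_of_le hδpos (hlamlow j)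
  -- upper bound on gfun S in terms of eigenvalues
  have hlogdet : Real.log S.det = ∑ j, Real.log (lam j) := by
    rw [hldet, Real.log_prod (fun j _ => (hlampos j).ne')]
  have hPup : ∀ i, y i ⬝ᵥ S *ᵥ y i ≤ R * N i := fun i => hup (y i)
  have hlogP : ∀ i : Fin n, Real.log (y i ⬝ᵥ S *ᵥ y i) ≤ Real.log R + Real.log (N i) := by
    intro i
    calc Real.log (y i ⬝ᵥ S *ᵥ y i) ≤ Real.log (R * N i) :=
          Real.log_le_log (hKP S hSK i) (hPup i)
      _ = Real.log R + Real.log (N i) := Real.log_mul hRpos.ne' (hNpos i).ne'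
  have hgSle : gfun y c' S ≤ ∑ j, Real.log (lam j) - ∑ j, lam j +
      c' * ((n : ℝ) * Real.log R + ∑ i, Real.log (N i)) := by
    rw [gfun, hlogdet, hltr]
    have h1 : ∑ i, Real.log (y i ⬝ᵥ S *ᵥ y i) ≤ (n : ℝ) * Real.log R + ∑ i, Real.log (N i) := by
      calc ∑ i, Real.log (y i ⬝ᵥ S *ᵥ y i) ≤ ∑ i : Fin n, (Real.log R + Real.log (N i)) :=
            Finset.sum_le_sum fun i _ => hlogP i
        _ = (n : ℝ) * Real.log R + ∑ i, Real.log (N i) := by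
            rw [Finset.sum_add_distrib]
            simp [Finset.sum_const, mul_comm]
    have := mul_le_mul_of_nonneg_left h1 hc'.le
    linarith
  have hCc : c' * ((n : ℝ) * Real.log R + ∑ i, Real.log (N i)) = c' * n * Real.log R + CN := by
    rw [hCN]; ring
  -- all eigenvalues are > 2δ
  have hlam2δ : ∀ j, 2 * δ < lam j := by
    intro j
    by_contra hcon
    push_neg at hcon
    have hsum1 : ∑ k, Real.log (lam k) ≤ Real.log (2 * δ) + (q : ℝ) * Real.log R := by
      have h1 : ∑ k ∈ Finset.univ.erase j, Real.log (lam k) + Real.log (lam j)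
          = ∑ k, Real.log (lam k) := Finset.sum_erase_add _ _ (Finset.mem_univ j)
      have h2 : Real.log (lam j) ≤ Real.log (2 * δ) :=
        Real.log_le_log (hlampos j) hcon
      have h3 : ∑ k ∈ Finset.univ.erase j, Real.log (lam k) ≤ (q : ℝ) * Real.log R := by
        calc ∑ k ∈ Finset.univ.erase j, Real.log (lam k)
            ≤ ∑ k ∈ Finset.univ.erase j, Real.log R :=
              Finset.sum_le_sum fun k _ => Real.log_le_log (hlampos k) (hlamup k)
          _ = (Finset.univ.erase j).card * Real.log R := by
              rw [Finset.sum_const, nsmul_eq_mul]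
          _ ≤ (q : ℝ) * Real.log R := by
              have hcard : ((Finset.univ.erase j).card : ℝ) ≤ (q : ℝ) := by
                have := Finset.card_erase_le (s := (Finset.univ : Finset (Fin q))) (a := j)
                have hq : (Finset.univ : Finset (Fin q)).card = q := Finset.card_fin q
                exact_mod_cast le_trans this (le_of_eq hq)
              exact mul_le_mul_of_nonneg_right hcard hlogR
      linarith
    have hsum2 : (0:ℝ) ≤ ∑ k, lam k := Finset.sum_nonneg fun k _ => (hlampos k).le
    have : gfun y c' S ≤ Real.log (2 * δ) + (q : ℝ) * Real.log R + c' * n * Real.log R + CN := by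
      rw [hCc] at hgSle
      linarith
    have hfin : gfun y c' S ≤ g1 - 2 := by
      have : gfun y c' S ≤ (g1 - 2 - C3) + (q : ℝ) * Real.log R + c' * n * Real.log R + CN := by
        linarith [hlogδ]
      rw [hC3] at this
      linarith
    linarith
  -- all eigenvalues are < R/2
  have hlamR2 : ∀ j, lam j < R / 2 := by
    intro j
    by_contra hcon
    push_neg at hcon
    have hsum1 : ∑ k, Real.log (lam k) ≤ (q : ℝ) * Real.log R := by
      calc ∑ k, Real.log (lam k) ≤ ∑ _k : Fin q, Real.log R :=
            Finset.sum_le_sum fun k _ => Real.log_le_log (hlampos k) (hlamup k)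
        _ = (q : ℝ) * Real.log R := by
            rw [Finset.sum_const, nsmul_eq_mul, Finset.card_fin]
    have hsum2 : R / 2 ≤ ∑ k, lam k := by
      calc R / 2 ≤ lam j := hcon
        _ ≤ ∑ k, lam k := Finset.single_le_sum (fun k _ => (hlampos k).le) (Finset.mem_univ j)
    have : gfun y c' S ≤ C3 - R / 2 := by
      rw [hCc] at hgSle
      rw [hC3]
      have hq : (q : ℝ) * Real.log R + c' * n * Real.log R = ((q : ℝ) + c' * n) * Real.log R := by
        ring
      linarith
    linarith
  -- quadratic bounds at the maximizer
  have hlow2 : ∀ x : Fin q → ℝ, 2 * δ * (x ⬝ᵥ x) ≤ x ⬝ᵥ S *ᵥ x := by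
    intro x
    obtain ⟨z, hz1, hz2⟩ := hquad x
    rw [hz1, hz2, Finset.mul_sum]
    exact Finset.sum_le_sum fun j _ =>
      mul_le_mul_of_nonneg_right (hlam2δ j).le (sq_nonneg _)
  have hup2 : ∀ x : Fin q → ℝ, x ⬝ᵥ S *ᵥ x ≤ R / 2 * (x ⬝ᵥ x) := by
    intro x
    obtain ⟨z, hz1, hz2⟩ := hquad x
    rw [hz1, hz2, Finset.mul_sum]
    exact Finset.sum_le_sum fun j _ =>
      mul_le_mul_of_nonneg_right (hlamR2 j).le (sq_nonneg _)
  have hSpd : S.PosDef := posDef_of_low hH (by linarith : (0:ℝ) < 2 * δ) hlow2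
  have hdetS : S.det ≠ 0 := hSpd.det_pos.ne'
  have hPpos : ∀ i, 0 < y i ⬝ᵥ S *ᵥ y i := hKP S hSK
  -- first-order condition
  have hcrit : ∀ H : Matrix (Fin q) (Fin q) ℝ, H.IsHermitian →
      (S⁻¹ * H).trace - H.trace + c' * ∑ i, (y i ⬝ᵥ H *ᵥ y i) / (y i ⬝ᵥ S *ᵥ y i) = 0 := by
    intro H hHH
    set cH : ℝ := (∑ a, ∑ b, |H a b|) + 1 with hcH
    have hcHpos : 0 < cH := by
      have : (0:ℝ) ≤ ∑ a, ∑ b, |H a b| :=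
        Finset.sum_nonneg fun a _ => Finset.sum_nonneg fun b _ => abs_nonneg _
      rw [hcH]; linarith
    have hquadH : ∀ x : Fin q → ℝ, |x ⬝ᵥ H *ᵥ x| ≤ cH * (x ⬝ᵥ x) := by
      intro x
      calc |x ⬝ᵥ H *ᵥ x| ≤ (∑ a, ∑ b, |H a b|) * (x ⬝ᵥ x) := quad_abs_le H x
        _ ≤ cH * (x ⬝ᵥ x) := by
            rw [hcH]
            nlinarith [dotProduct_self_nonneg' x]
    have hmem : ∀ t : ℝ, |t| ≤ δ / cH → S + t • H ∈ K := by
      intro t ht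
      rw [hK, mem_Kset_iff]
      have htcH : |t| * cH ≤ δ := by
        rw [le_div_iff₀ hcHpos] at ht
        exact ht
      have hquadt : ∀ x : Fin q → ℝ, |t * (x ⬝ᵥ H *ᵥ x)| ≤ δ * (x ⬝ᵥ x) := by
        intro x
        rw [abs_mul]
        calc |t| * |x ⬝ᵥ H *ᵥ x| ≤ |t| * (cH * (x ⬝ᵥ x)) :=
              mul_le_mul_of_nonneg_left (hquadH x) (abs_nonneg t)
          _ = (|t| * cH) * (x ⬝ᵥ x) := by ring
          _ ≤ δ * (x ⬝ᵥ x) := mul_le_mul_of_nonneg_right htcH (dotProduct_self_nonneg' x)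
      have hqlin : ∀ x : Fin q → ℝ, x ⬝ᵥ (S + t • H) *ᵥ x = x ⬝ᵥ S *ᵥ x + t * (x ⬝ᵥ H *ᵥ x) := by
        intro x
        simp [add_mulVec, smul_mulVec, dotProduct_add, dotProduct_smul, smul_eq_mul]
      refine ⟨hH.add (herm_smul hHH t), fun x => ?_, fun x => ?_⟩
      · rw [hqlin]
        have h1 := hlow2 x
        have h2 := abs_le.mp (hquadt x)
        linarith
      · rw [hqlin]
        have h1 := hup2 x
        have h2 := abs_le.mp (hquadt x)
        have h3 : δ ≤ R / 2 := by linarith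
        have h4 := dotProduct_self_nonneg' x
        nlinarith
    have hloc : IsLocalMax (fun t : ℝ => gfun y c' (S + t • H)) 0 := by
      rw [IsLocalMax, IsMaxFilter]
      have hball : ∀ t : ℝ, dist t 0 < δ / cH → gfun y c' (S + t • H) ≤ gfun y c' (S + (0:ℝ) • H) := by
        intro t ht
        have h0 : S + (0:ℝ) • H = S := by simp
        rw [h0]
        have : |t| ≤ δ / cH := by
          rw [Real.dist_eq, sub_zero] at ht
          exact ht.le
        exact hmax (hmem t this)
      exact Metric.eventually_nhds_iff.mpr ⟨δ / cH, by positivity, fun {t} ht => hball t ht⟩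
    have hDA := hasDerivAt_gfun y c' H hdetS (fun i => (hPpos i).ne')
    have := hloc.deriv_eq_zero
    rw [hDA.deriv] at this
    exact this
  -- the first-order condition in matrix form
  set P : Fin n → ℝ := fun i => y i ⬝ᵥ S *ᵥ y i with hPdef
  set M : Matrix (Fin q) (Fin q) ℝ := Ymat y * diagonal (fun i => (P i)⁻¹) * (Ymat y)ᵀ with hM
  set A0 : Matrix (Fin q) (Fin q) ℝ := S⁻¹ - 1 + c' • M with hA0
  have hMherm : M.IsHermitian := by
    rw [hM, Matrix.IsHermitian]
    rw [ct_eq_t]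
    rw [Matrix.transpose_mul, Matrix.transpose_mul, Matrix.transpose_transpose,
      diagonal_transpose, Matrix.mul_assoc]
  have hSinvherm : (S⁻¹).IsHermitian := hH.inv
  have hA0herm : A0.IsHermitian := by
    rw [hA0]
    exact (hSinvherm.sub isHermitian_one).add (herm_smul hMherm c')
  have htraceA0 : ∀ H : Matrix (Fin q) (Fin q) ℝ, H.IsHermitian → (A0 * H).trace = 0 := by
    intro H hHH
    have hexp : A0 * H = S⁻¹ * H - 1 * H + c' • (M * H) := by
      rw [hA0, Matrix.add_mul, Matrix.sub_mul, Matrix.smul_mul]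
    rw [hexp, Matrix.trace_add, Matrix.trace_sub, Matrix.one_mul, Matrix.trace_smul]
    have hMH : (M * H).trace = ∑ i, (P i)⁻¹ * (y i ⬝ᵥ H *ᵥ y i) := by
      rw [hM]
      exact trace_YDYt_mul y _ H
    rw [hMH]
    have := hcrit H hHH
    have hsum : ∑ i, (P i)⁻¹ * (y i ⬝ᵥ H *ᵥ y i) =
        ∑ i, (y i ⬝ᵥ H *ᵥ y i) / (y i ⬝ᵥ S *ᵥ y i) := by
      exact Finset.sum_congr rfl fun i _ => by
        rw [hPdef]
        rw [div_eq_inv_mul]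
    rw [hsum]
    simpa using this
  have hA0zero : A0 = 0 := by
    have h1 : (A0 * A0).trace = 0 := htraceA0 A0 hA0herm
    have h2 : A0ᵀ = A0 := by
      have := hA0herm
      rw [Matrix.IsHermitian, ct_eq_t] at this
      exact this
    rw [trace_sq_eq_sum_sq h2] at h1
    have h3 : ∀ i ∈ (Finset.univ : Finset (Fin q)), ∑ j, (A0 i j) ^ 2 = 0 := by
      rw [← Finset.sum_eq_zero_iff_of_nonneg]
      · exact h1
      · exact fun i _ => Finset.sum_nonneg fun j _ => sq_nonneg _
    ext i j
    have h4 := h3 i (Finset.mem_univ i)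
    have h5 : ∀ j ∈ (Finset.univ : Finset (Fin q)), (A0 i j) ^ 2 = 0 := by
      rw [← Finset.sum_eq_zero_iff_of_nonneg]
      · exact h4
      · exact fun j _ => sq_nonneg _
    have := h5 j (Finset.mem_univ j)
    have := pow_eq_zero_iff (n := 2) (by norm_num) |>.mp this
    simpa using this
  have heqM : c' • M = 1 - S⁻¹ := by
    have h : S⁻¹ - 1 + c' • M = 0 := hA0zero
    calc c' • M = (S⁻¹ - 1 + c' • M) + (1 - S⁻¹) := by abel
      _ = 0 + (1 - S⁻¹) := by rw [h]
      _ = 1 - S⁻¹ := by rw [zero_add]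
  -- fixed point
  have hfix : Gmap y c' S = S := Gmap_eq_self y c' S hSpd (by rw [← hM, hPdef] at *; exact heqM)
  -- S - 1 is PSD
  have hpsdS : S.PosSemidef := hSpd.posSemidef
  have hS1 : S = 1 + hpsdS.sqrt * (c' • M) * hpsdS.sqrt := by
    conv_lhs => rw [← hfix, Gmap_grouped y c' S hpsdS]
  have hMpsd : M.PosSemidef := by
    rw [hM]
    have hD : (diagonal (fun i => (P i)⁻¹) : Matrix (Fin n) (Fin n) ℝ).PosSemidef := by
      refine Matrix.PosSemidef.diagonal ?_
      intro i
      have := hPpos i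
      rw [hPdef]
      positivity
    have := hD.mul_mul_conjTranspose_same (Ymat y)
    rwa [ct_eq_t] at this
  have hcMpsd : (c' • M).PosSemidef := by
    refine psd_of_quad (herm_smul hMherm c') fun x => ?_
    have h1 := psd_quad hMpsd x
    have h2 : x ⬝ᵥ (c' • M) *ᵥ x = c' * (x ⬝ᵥ M *ᵥ x) := by
      simp [smul_mulVec, dotProduct_smul, smul_eq_mul]
    rw [h2]
    positivity
  have hQpsd : (hpsdS.sqrt * (c' • M) * hpsdS.sqrt).PosSemidef := by
    have := hcMpsd.mul_mul_conjTranspose_same hpsdS.sqrt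
    rwa [hpsdS.posSemidef_sqrt.1.eq] at this
  have hloew1 : loewnerLE 1 S := by
    rw [loewnerLE]
    have : S - 1 = hpsdS.sqrt * (c' • M) * hpsdS.sqrt := by
      conv_lhs => rw [hS1]
      abel
    rwa [this]
  -- trace bound for the upper Loewner bound
  have htrS : S.trace = q + c' * n :=
    trace_eq_of_fixed y c' S hpsdS (fun i => (hPpos i).ne') (by rw [← hM, hPdef] at *; exact hS1)
  have hlam1 : ∀ j, 1 ≤ lam j := by
    intro j
    obtain ⟨x, hx1, hx2⟩ := hper j
    have hq := psd_quad hloew1 x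
    have h1 : (1 : Matrix (Fin q) (Fin q) ℝ) = (1:ℝ) • 1 := by rw [one_smul]
    rw [h1, quad_sub_smul_one, hx1, hx2] at hq
    linarith
  have hlamsum : ∑ j, lam j = q + c' * n := by rw [← hltr, htrS]
  have hlamle : ∀ j, lam j ≤ 1 + c' * n := by
    intro j
    have hq1 : 1 ≤ q := Fin.pos j
    have hsum : ∑ k ∈ Finset.univ.erase j, lam k + lam j = ∑ k, lam k :=
      Finset.sum_erase_add _ _ (Finset.mem_univ j)
    have hcard : (Finset.univ.erase j).card = q - 1 := by
      rw [Finset.card_erase_of_mem (Finset.mem_univ j), Finset.card_fin]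
    have hbound : ((q : ℝ) - 1) ≤ ∑ k ∈ Finset.univ.erase j, lam k := by
      calc ((q : ℝ) - 1) = ((Finset.univ.erase j).card : ℝ) := by
            rw [hcard]
            rw [Nat.cast_sub hq1]
            norm_num
        _ = ∑ _k ∈ Finset.univ.erase j, (1:ℝ) := by rw [Finset.sum_const, nsmul_eq_mul, mul_one]
        _ ≤ ∑ k ∈ Finset.univ.erase j, lam k := Finset.sum_le_sum fun k _ => hlam1 k
    have := hlamsum
    linarith [hbound, hsum.symm ▸ this]
  have hupS : ∀ x : Fin q → ℝ, x ⬝ᵥ S *ᵥ x ≤ (1 + c' * n) * (x ⬝ᵥ x) := by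
    intro x
    obtain ⟨z, hz1, hz2⟩ := hquad x
    rw [hz1, hz2, Finset.mul_sum]
    exact Finset.sum_le_sum fun j _ =>
      mul_le_mul_of_nonneg_right (hlamle j) (sq_nonneg _)
  have hloew2 : loewnerLE S (μ • 1) := by
    rw [loewnerLE]
    refine psd_of_quad ((herm_smul_one μ).sub hH) fun x => ?_
    rw [quad_smul_one_sub]
    have h1 := hupS x
    have h2 := dotProduct_self_nonneg' x
    nlinarith
  exact ⟨S, hH, hloew1, hloew2, hfix⟩
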